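/- arXiv:math/0609401 — 4 statements merged into one kernel-verified Lean document; each statement's English description precedes it below -/
import Mathlib

section
/- There exists an increasing sequence (B_n) of Borel subsets of the real line whose union is all of ℝ, such that for no n can ℝ be covered by countably many translates of B_n. -/
open Set

noncomputable section

def EE (k : ℕ) : ℝ := 2 ^ (k^3)
def pp (k : ℕ) : ℝ := (EE k)⁻¹
def gg (k : ℕ) (x : ℝ) : ℝ := Int.fract (EE k * x)

def Bset (n : ℕ) : Set ℝ :=
  {x | (∀ k, ¬(0 < gg k x ∧ gg k x < (1/2:ℝ)^n)) ∨ (∀ m : ℕ, ∃ k, 0 < gg k x ∧ gg k x < (1/2:ℝ)^m)}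

lemma EE_pos (k : ℕ) : (0:ℝ) < EE k := by unfold EE; positivity
lemma pp_pos (k : ℕ) : (0:ℝ) < pp k := by unfold pp; exact inv_pos.2 (EE_pos k)
lemma EE_mul_pp (k : ℕ) : EE k * pp k = 1 := mul_inv_cancel₀ (ne_of_gt (EE_pos k))

lemma pp_eq (k : ℕ) : pp k = (1/2:ℝ)^(k^3) := by
  unfold pp EE; rw [← inv_pow]; norm_num

lemma measurable_gg (k : ℕ) : Measurable (gg k) :=
  (measurable_const.mul measurable_id).fract

lemma measurable_Bset (n : ℕ) : MeasurableSet (Bset n) := by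
  have h1 : ∀ (k : ℕ) (c : ℝ), MeasurableSet {x : ℝ | 0 < gg k x ∧ gg k x < c} := by
    intro k c
    have : {x : ℝ | 0 < gg k x ∧ gg k x < c} = gg k ⁻¹' (Ioo 0 c) := rfl
    rw [this]
    exact measurableSet_Ioo.preimage (measurable_gg k)
  have : Bset n = (⋂ k, {x : ℝ | 0 < gg k x ∧ gg k x < (1/2:ℝ)^n}ᶜ) ∪
      (⋂ m : ℕ, ⋃ k, {x : ℝ | 0 < gg k x ∧ gg k x < (1/2:ℝ)^m}) := by
    ext x
    simp [Bset, mem_iInter, mem_iUnion]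
  rw [this]
  exact ((MeasurableSet.iInter fun k => (h1 k _).compl).union
    (MeasurableSet.iInter fun m => MeasurableSet.iUnion fun k => h1 k _))

lemma monotone_Bset : Monotone Bset := by
  apply monotone_nat_of_le_succ
  intro n x hx
  rcases hx with h | h
  · left
    intro k hk
    exact h k ⟨hk.1, lt_of_lt_of_le hk.2 (by
      apply pow_le_pow_of_le_one (by norm_num) (by norm_num) (Nat.le_succ n))⟩
  · right; exact h

lemma iUnion_Bset : (⋃ n, Bset n) = univ := by
  ext x
  simp only [mem_iUnion, mem_univ, iff_true]
  by_cases h : ∀ m : ℕ, ∃ k, 0 < gg k x ∧ gg k x < (1/2:ℝ)^m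
  · exact ⟨0, Or.inr h⟩
  · push_neg at h
    obtain ⟨m, hm⟩ := h
    exact ⟨m, Or.inl fun k hk => absurd hk.2 (not_lt.2 (hm k hk.1))⟩


/-- Remove one open arc from a closed interval, keeping a quarter of the length. -/
lemma removeOne (c L u e : ℝ) (hL : 0 < L) (he : 0 < e) (heL : e ≤ L/2) :
    ∃ c', c ≤ c' ∧ c' + L/4 ≤ c + L ∧
      ∀ y, c' ≤ y → y ≤ c' + L/4 → y ∉ Ioo u (u+e) := by
  by_cases h : c + L/4 ≤ u
  · exact ⟨c, le_rfl, by linarith, fun y hy1 hy2 hy => by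
      have := hy.1; linarith⟩
  · push_neg at h
    refine ⟨max c (u+e), le_max_left _ _, ?_, fun y hy1 hy2 hy => ?_⟩
    · rcases max_cases c (u+e) with ⟨hm, _⟩ | ⟨hm, _⟩ <;> rw [hm] <;> linarith
    · have : u + e ≤ y := le_trans (le_max_right _ _) hy1
      have := hy.2; linarith

/-- Iteratively remove two arcs per index, shrinking by 16 each time. -/
lemma innerRec (Λ : ℝ) (hΛ : 0 < Λ) (u₁ u₂ e : ℕ → ℝ) (he : ∀ i, 0 < e i)
    (hee : ∀ i, e i ≤ Λ * (16:ℝ)⁻¹^i / 8) :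
    ∀ (m : ℕ) (c : ℝ), ∃ c', c ≤ c' ∧ c' + Λ * (16:ℝ)⁻¹^m ≤ c + Λ ∧
      ∀ i < m, ∀ y, c' ≤ y → y ≤ c' + Λ * (16:ℝ)⁻¹^m →
        y ∉ Ioo (u₁ i) (u₁ i + e i) ∧ y ∉ Ioo (u₂ i) (u₂ i + e i) := by
  intro m
  induction m with
  | zero => intro c; exact ⟨c, le_rfl, by norm_num, fun i hi => absurd hi (Nat.not_lt_zero i)⟩
  | succ m ih =>
    intro c
    obtain ⟨c₁, hc₁, hc₁', hav₁⟩ := ih c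
    set Lm : ℝ := Λ * (16:ℝ)⁻¹^m with hLm
    have hLmpos : 0 < Lm := by positivity
    have heLm : e m ≤ Lm / 2 := le_trans (hee m) (by rw [hLm]; ring_nf; nlinarith [pow_pos (show (0:ℝ) < 16⁻¹ by norm_num) m])
    obtain ⟨c₂, hc₂, hc₂', hav₂⟩ := removeOne c₁ Lm (u₁ m) (e m) hLmpos (he m) heLm
    have heLm4 : e m ≤ (Lm/4) / 2 := le_trans (hee m) (by rw [hLm]; nlinarith [pow_pos (show (0:ℝ) < 16⁻¹ by norm_num) m])
    obtain ⟨c₃, hc₃, hc₃', hav₃⟩ := removeOne c₂ (Lm/4) (u₂ m) (e m) (by positivity) (he m) heLm4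
    have hnew : Λ * (16:ℝ)⁻¹^(m+1) = Lm/16 := by rw [hLm]; ring
    refine ⟨c₃, le_trans hc₁ (le_trans hc₂ hc₃), by rw [hnew]; linarith, ?_⟩
    intro i hi y hy1 hy2
    rw [hnew] at hy2
    have hy2' : y ≤ c₃ + (Lm/4)/4 := by linarith
    have hy2'' : y ≤ c₂ + Lm/4 := le_trans hy2' (by linarith)
    have hy2''' : y ≤ c₁ + Lm := le_trans hy2'' (by linarith)
    have hyc₂ : c₂ ≤ y := le_trans hc₃ hy1
    have hyc₁ : c₁ ≤ y := le_trans hc₂ hyc₂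
    rcases Nat.lt_succ_iff_lt_or_eq.1 hi with hi' | rfl
    · exact hav₁ i hi' y hyc₁ hy2'''
    · exact ⟨hav₂ y hyc₂ hy2'', hav₃ y hy1 hy2'⟩


lemma fract_of_mem (x : ℝ) (z : ℤ) (α β : ℝ) (h0 : 0 ≤ α) (hβ : β < 1)
    (h1 : (z:ℝ) + α ≤ x) (h2 : x ≤ (z:ℝ) + β) :
    α ≤ Int.fract x ∧ Int.fract x ≤ β := by
  have : Int.fract x = Int.fract (x - z) := (Int.fract_sub_intCast x z).symm
  rw [this, Int.fract_eq_self.2 ⟨by linarith, by linarith⟩]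
  constructor <;> linarith

lemma fract_small_mem (x : ℝ) (z0 : ℤ) (ε : ℝ) (h1 : (z0:ℝ) ≤ x) (h2 : x < (z0:ℝ) + 2)
    (h3 : 0 < Int.fract x) (h4 : Int.fract x < ε) :
    ((z0:ℝ) < x ∧ x < (z0:ℝ) + ε) ∨ ((z0:ℝ) + 1 < x ∧ x < (z0:ℝ) + 1 + ε) := by
  have hfl : ⌊x⌋ = z0 ∨ ⌊x⌋ = z0 + 1 := by
    have l1 : z0 ≤ ⌊x⌋ := Int.le_floor.2 h1
    have l2 : ⌊x⌋ ≤ z0 + 1 := by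
      have hx2 : x < ((z0 + 2 : ℤ) : ℝ) := by push_cast; linarith
      have := Int.floor_le_floor (le_of_lt (lt_of_lt_of_le hx2 (le_refl _)))
      have h5 : ⌊x⌋ < z0 + 2 := Int.floor_lt.2 (by push_cast; linarith)
      omega
    omega
  have hx : Int.fract x = x - (⌊x⌋ : ℝ) := rfl
  rw [hx] at h3 h4
  rcases hfl with h | h
  · rw [h] at h3 h4; left; constructor <;> linarith
  · rw [h] at h3 h4; push_cast at h3 h4; right; constructor <;> linarith

lemma slotStep (n j : ℕ) (f : ℕ → ℝ) (a : ℝ) :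
    ∃ a', a ≤ a' ∧ a' + 2 * pp (n+4+j+1) ≤ a + 2 * pp (n+4+j) ∧
      ∀ y, a' ≤ y → y ≤ a' + 2 * pp (n+4+j+1) →
        ((1/2:ℝ)^(n+2) ≤ gg (n+4+j) (y - f j) ∧ gg (n+4+j) (y - f j) ≤ (1/2:ℝ)^(n+1))
        ∧ ∀ i < j, ¬(0 < gg (n+4+j) (y - f i) ∧ gg (n+4+j) (y - f i) < (1/2:ℝ)^(n+5*i+5)) := by
  set k := n + 4 + j with hk
  set p := pp k with hp
  have hppos : 0 < p := pp_pos k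
  have hEp : EE k * p = 1 := EE_mul_pp k
  have hEpos : 0 < EE k := EE_pos k
  set t := f j with ht
  set α : ℝ := (1/2)^(n+2) with hα
  set β : ℝ := (1/2)^(n+1) with hβ
  have hαpos : 0 < α := by positivity
  have hβα : β = 2*α := by rw [hα, hβ]; ring
  have hβ1 : β < 1 := by
    rw [hβ]; exact pow_lt_one₀ (by norm_num) (by norm_num) (Nat.succ_ne_zero n)
  set z : ℤ := ⌈(a - t) * EE k⌉ with hz
  set c : ℝ := t + ((z:ℝ) + α) * p with hc
  set Λ : ℝ := α * p with hΛdef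
  have hΛpos : 0 < Λ := by positivity
  have hzfacts : ((a - t) * EE k ≤ (z:ℝ)) ∧ ((z:ℝ) < (a - t) * EE k + 1) :=
    ⟨Int.le_ceil _, Int.ceil_lt_add_one _⟩
  clear_value k p t α β z c Λ
  have hac : a ≤ c := by
    have h1 : (a - t) * EE k ≤ (z:ℝ) := hzfacts.1
    have h2 : (a - t) * EE k * p ≤ (z:ℝ) * p :=
      mul_le_mul_of_nonneg_right h1 (le_of_lt hppos)
    have h3 : (a - t) * (EE k * p) ≤ (z:ℝ) * p := by linarith [h2]
    rw [hEp] at h3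
    rw [hc]; nlinarith
  have hcΛ : c + Λ ≤ a + 2 * p := by
    have h1 : (z:ℝ) < (a - t) * EE k + 1 := hzfacts.2
    have h2 : (z:ℝ) * p < ((a - t) * EE k + 1) * p := by
      exact mul_lt_mul_of_pos_right h1 hppos
    have h3 : ((a - t) * EE k + 1) * p = (a - t) * (EE k * p) + p := by ring
    rw [hEp] at h3
    have hα1 : α ≤ 1/2 := by
      rw [hα]
      calc ((1:ℝ)/2)^(n+2) ≤ (1/2)^1 := by
            apply pow_le_pow_of_le_one (by norm_num) (by norm_num); omega
        _ = 1/2 := by norm_num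
    rw [hc, hΛdef]; nlinarith
  -- arcs
  have hepos : ∀ i, (0:ℝ) < (1/2:ℝ)^(n+5*i+5) * p := fun i => by positivity
  have hee : ∀ i, (1/2:ℝ)^(n+5*i+5) * p ≤ Λ * (16:ℝ)⁻¹^i / 8 := by
    intro i
    have h16 : ((16:ℝ)⁻¹)^i = (1/2:ℝ)^(4*i) := by rw [pow_mul]; norm_num
    rw [hΛdef, hα, h16]
    have hid : (1/2:ℝ)^(n+2) * (1/2)^(4*i) / 8 = (1/2)^(n+4*i+5) := by
      rw [show n+4*i+5 = (n+2)+(4*i)+3 by ring, pow_add, pow_add]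
      ring
    calc (1/2:ℝ)^(n+5*i+5) * p ≤ (1/2)^(n+4*i+5) * p := by
          apply mul_le_mul_of_nonneg_right _ (le_of_lt hppos)
          apply pow_le_pow_of_le_one (by norm_num) (by norm_num); omega
      _ = (1/2)^(n+2) * (1/2)^(4*i) / 8 * p := by rw [hid]
      _ = (1/2)^(n+2) * p * (1/2)^(4*i) / 8 := by ring
  obtain ⟨c', hcc', hc'Λ, hav⟩ := innerRec Λ hΛpos
    (fun i => f i + ((⌊(c - f i) * EE k⌋ : ℤ) : ℝ) * p)
    (fun i => f i + (((⌊(c - f i) * EE k⌋ : ℤ) : ℝ) + 1) * p)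
    (fun i => (1/2:ℝ)^(n+5*i+5) * p) hepos hee j c
  -- final length
  have hlen : 2 * pp (k+1) ≤ Λ * (16:ℝ)⁻¹^j := by
    have h16 : ((16:ℝ)⁻¹)^j = (1/2:ℝ)^(4*j) := by rw [pow_mul]; norm_num
    rw [hΛdef, hα, h16, hp, pp_eq, pp_eq]
    have hexp : n+2+k^3+4*j + 1 ≤ (k+1)^3 := by
      have h1 : k ≤ k^2 := Nat.le_self_pow (by norm_num) k
      have h2 : n+2+3*j ≤ 3*k := by omega
      have h3 : (k+1)^3 = k^3+3*k^2+3*k+1 := by ring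
      have h4 : j ≤ k := by omega
      linarith
    calc 2 * (1/2:ℝ)^((k+1)^3) ≤ 2 * (1/2)^(n+2+k^3+4*j+1) := by
          have := pow_le_pow_of_le_one (show (0:ℝ) ≤ 1/2 by norm_num)
            (show (1/2:ℝ) ≤ 1 by norm_num) hexp
          linarith
      _ = (1/2)^(n+2+k^3+4*j) := by rw [pow_succ]; ring
      _ = (1/2)^(n+2) * (1/2)^(k^3) * (1/2)^(4*j) := by
          rw [← pow_add, ← pow_add]
  refine ⟨c', le_trans hac hcc', ?_, ?_⟩
  · calc c' + 2 * pp (k+1) ≤ c' + Λ * (16:ℝ)⁻¹^j := by linarith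
      _ ≤ c + Λ := hc'Λ
      _ ≤ a + 2 * p := hcΛ
  intro y hy1 hy2
  have hyC : y ≤ c' + Λ * (16:ℝ)⁻¹^j := by linarith
  have hyc : c ≤ y := le_trans hcc' hy1
  have hycΛ : y ≤ c + Λ := le_trans hyC hc'Λ
  constructor
  · -- hit
    have hxlo : (z:ℝ) + α ≤ EE k * (y - t) := by
      have : ((z:ℝ) + α) * p ≤ y - t := by rw [hc] at hyc; linarith
      have h2 := mul_le_mul_of_nonneg_left this (le_of_lt hEpos)
      calc (z:ℝ) + α = ((z:ℝ) + α) * (EE k * p) := by rw [hEp]; ring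
        _ = EE k * (((z:ℝ) + α) * p) := by ring
        _ ≤ EE k * (y - t) := h2
    have hxhi : EE k * (y - t) ≤ (z:ℝ) + β := by
      have : y - t ≤ ((z:ℝ) + β) * p := by
        rw [hc, hΛdef] at hycΛ; rw [hβα]; nlinarith
      have h2 := mul_le_mul_of_nonneg_left this (le_of_lt hEpos)
      calc EE k * (y - t) ≤ EE k * (((z:ℝ) + β) * p) := h2
        _ = ((z:ℝ) + β) * (EE k * p) := by ring
        _ = (z:ℝ) + β := by rw [hEp]; ring
    exact fract_of_mem _ z α β (le_of_lt hαpos) hβ1 hxlo hxhi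
  · -- avoid
    intro i hij hbad
    have havi := hav i hij y hy1 hyC
    simp only [mem_Ioo, not_and, not_lt] at havi
    set x : ℝ := EE k * (y - f i) with hxdef
    set x0 : ℝ := (c - f i) * EE k with hx0def
    set z0 : ℤ := ⌊x0⌋ with hz0def
    have hfl : (z0:ℝ) ≤ x0 ∧ x0 < (z0:ℝ) + 1 := ⟨Int.floor_le x0, Int.lt_floor_add_one x0⟩
    have hbad' : 0 < Int.fract x ∧ Int.fract x < (1/2:ℝ)^(n+5*i+5) := hbad
    clear_value x x0 z0
    have hx0x : x - x0 = EE k * (y - c) := by rw [hxdef, hx0def]; ring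
    have hxlo : (z0 : ℝ) ≤ x := by
      have h1 : (z0 : ℝ) ≤ x0 := hfl.1
      linarith only [h1, hx0x, mul_nonneg (le_of_lt hEpos) (sub_nonneg.2 hyc)]
    have hxhi : x < (z0 : ℝ) + 2 := by
      have h1 : x0 < (z0 : ℝ) + 1 := hfl.2
      have h2 : EE k * (y - c) ≤ EE k * Λ := by
        apply mul_le_mul_of_nonneg_left _ (le_of_lt hEpos); linarith
      have h3 : EE k * Λ = α := by
        rw [hΛdef, mul_comm α p, ← mul_assoc, hEp]; ring
      have hα1 : α ≤ 1 := by
        rw [hα]; exact pow_le_one₀ (by norm_num) (by norm_num)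
      linarith only [h1, h2, h3, hα1, hx0x]
    have hfr := fract_small_mem x z0 ((1/2:ℝ)^(n+5*i+5)) hxlo hxhi hbad'.1 hbad'.2
    have hyeq : y = f i + x * p := by
      rw [hxdef]
      have h5 : EE k * (y - f i) * p = (y - f i) * (EE k * p) := by ring
      rw [h5, hEp]; ring
    rcases hfr with ⟨hl, hr⟩ | ⟨hl, hr⟩
    · have hlp := mul_lt_mul_of_pos_right hl hppos
      have hrp := mul_lt_mul_of_pos_right hr hppos
      have h7 : f i + (z0:ℝ) * p < y := by rw [hyeq]; linarith only [hlp]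
      have h8 := havi.1 h7
      rw [hyeq] at h8
      ring_nf at h8 hrp
      linarith only [h8, hrp]
    · have hlp := mul_lt_mul_of_pos_right hl hppos
      have hrp := mul_lt_mul_of_pos_right hr hppos
      have h7 : f i + ((z0:ℝ) + 1) * p < y := by rw [hyeq]; linarith only [hlp]
      have h8 := havi.2 h7
      rw [hyeq] at h8
      ring_nf at h8 hrp
      linarith only [h8, hrp]

lemma not_cover (n : ℕ) (T : Set ℝ) (hT : T.Countable) :
    (⋃ t ∈ T, (fun x => x + t) '' Bset n) ≠ univ := by
  rcases T.eq_empty_or_nonempty with rfl | hne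
  · intro h
    have : (0:ℝ) ∈ (⋃ t ∈ (∅:Set ℝ), (fun x => x + t) '' Bset n) := h ▸ mem_univ 0
    simpa using this
  obtain ⟨f, hf⟩ := Set.Countable.exists_eq_range hT hne
  -- recursive construction
  set A : ℕ → ℝ := fun m => Nat.rec 0 (fun m a => Classical.choose (slotStep n m f a)) m with hA
  have hAs : ∀ m, A (m+1) = Classical.choose (slotStep n m f (A m)) := fun m => rfl
  have hspec : ∀ m, A m ≤ A (m+1) ∧ (A (m+1) + 2 * pp (n+4+m+1) ≤ A m + 2 * pp (n+4+m)) ∧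
      ∀ y, A (m+1) ≤ y → y ≤ A (m+1) + 2 * pp (n+4+m+1) →
        ((1/2:ℝ)^(n+2) ≤ gg (n+4+m) (y - f m) ∧ gg (n+4+m) (y - f m) ≤ (1/2:ℝ)^(n+1))
        ∧ ∀ i < m, ¬(0 < gg (n+4+m) (y - f i) ∧ gg (n+4+m) (y - f i) < (1/2:ℝ)^(n+5*i+5)) := by
    intro m
    rw [hAs m]
    exact Classical.choose_spec (slotStep n m f (A m))
  have hchain : ∀ m m', m ≤ m' → A m ≤ A m' ∧ A m' + 2 * pp (n+4+m') ≤ A m + 2 * pp (n+4+m) := by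
    intro m m' hmm'
    induction m' , hmm' using Nat.le_induction with
    | base => exact ⟨le_rfl, le_rfl⟩
    | succ m' hmm' ih =>
      obtain ⟨h1, h2, _⟩ := hspec m'
      exact ⟨le_trans ih.1 h1, le_trans h2 ih.2⟩
  have hbdd : BddAbove (Set.range A) := by
    refine ⟨A 0 + 2 * pp (n+4), ?_⟩
    rintro x ⟨m, rfl⟩
    have := (hchain 0 m (Nat.zero_le m)).2
    have hp := pp_pos (n+4+m)
    simp only [Nat.add_zero] at this
    linarith
  set y : ℝ := ⨆ m, A m with hy
  have hylo : ∀ m, A m ≤ y := fun m => le_ciSup hbdd m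
  have hyhi : ∀ m, y ≤ A m + 2 * pp (n+4+m) := by
    intro m
    apply ciSup_le
    intro m'
    rcases le_total m m' with h | h
    · have := (hchain m m' h).2
      have hp := pp_pos (n+4+m')
      linarith
    · have := (hchain m' m h).1
      have hp := pp_pos (n+4+m)
      linarith
  -- y avoids every translate
  intro hcov
  have hymem : y ∈ ⋃ t ∈ T, (fun x => x + t) '' Bset n := hcov ▸ mem_univ y
  simp only [mem_iUnion, mem_image] at hymem
  obtain ⟨t, htT, b, hbB, hbty⟩ := hymem
  have : t ∈ range f := hf ▸ htT
  obtain ⟨i, rfl⟩ := this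
  have hb : b = y - f i := by linarith
  subst hb
  -- guarantees for index i
  have hhit := ((hspec i).2.2 y (hylo (i+1)) (hyhi (i+1))).1
  have havoid : ∀ m, i < m → ¬(0 < gg (n+4+m) (y - f i) ∧ gg (n+4+m) (y - f i) < (1/2:ℝ)^(n+5*i+5)) := by
    intro m him
    exact ((hspec m).2.2 y (hylo (m+1)) (hyhi (m+1))).2 i him
  rcases hbB with hD1 | hD2
  · -- contradiction with hit
    apply hD1 (n+4+i)
    constructor
    · calc (0:ℝ) < (1/2)^(n+2) := by positivity
        _ ≤ gg (n+4+i) (y - f i) := hhit.1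
    · calc gg (n+4+i) (y - f i) ≤ (1/2:ℝ)^(n+1) := hhit.2
        _ < (1/2:ℝ)^n := by
          apply pow_lt_pow_right_of_lt_one₀ (by norm_num) (by norm_num) (by omega)
  · -- contradiction with boundedness
    have hMk : ∀ k, ∃ mk : ℕ, ¬(0 < gg k (y - f i) ∧ gg k (y - f i) < (1/2:ℝ)^mk) := by
      intro k
      rcases le_or_gt (gg k (y - f i)) 0 with h | h
      · exact ⟨0, fun hc => absurd hc.1 (not_lt.2 h)⟩
      · obtain ⟨mk, hmk⟩ := exists_pow_lt_of_lt_one h (show (1/2:ℝ) < 1 by norm_num)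
        exact ⟨mk, fun hc => absurd hc.2 (not_lt.2 (le_of_lt hmk))⟩
    choose mk hmk using hMk
    set M : ℕ := max (n+5*i+5) ((Finset.range (n+4+i+1)).sup mk) with hM
    obtain ⟨k, hk1, hk2⟩ := hD2 M
    have hmono : ∀ (q r : ℕ), q ≤ r → (1/2:ℝ)^r ≤ (1/2)^q := fun q r h =>
      pow_le_pow_of_le_one (by norm_num) (by norm_num) h
    rcases le_or_gt k (n+4+i) with hkle | hkgt
    · apply hmk k
      refine ⟨hk1, lt_of_lt_of_le hk2 ?_⟩
      apply hmono
      calc mk k ≤ (Finset.range (n+4+i+1)).sup mk :=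
            Finset.le_sup (Finset.mem_range.2 (by omega))
        _ ≤ M := le_max_right _ _
    · have hkeq : k = n+4+(k-(n+4)) := by omega
      have him : i < k - (n+4) := by omega
      apply havoid (k-(n+4)) him
      rw [← hkeq]
      exact ⟨hk1, lt_of_lt_of_le hk2 (hmono _ _ (le_max_left _ _))⟩

/-- There exists an increasing sequence of Borel subsets of ℝ whose union is ℝ,
such that for no `n` can ℝ be covered by countably many translates of `B n`. -/
theorem borel_increasing_union_not_covered_by_translates :
    ∃ B : ℕ → Set ℝ,
      (∀ n, MeasurableSet (B n)) ∧
      Monotone B ∧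
      (⋃ n, B n) = Set.univ ∧
      ∀ n, ¬ ∃ T : Set ℝ, T.Countable ∧ (⋃ t ∈ T, (fun x => x + t) '' B n) = Set.univ := by
  refine ⟨Bset, measurable_Bset, monotone_Bset, iUnion_Bset, ?_⟩
  rintro n ⟨T, hT, hcov⟩
  exact not_cover n T hT hcov

end
end

section
/- If X is a set of reals such that C_p(X) has the Pytkeev property, then X has strong measure zero. -/
/-- The Pytkeev property. -/
def PytkeevProperty (Y : Type*) [TopologicalSpace Y] : Prop :=
  ∀ (y : Y) (A : Set Y), y ∈ closure (A \ {y}) →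
    ∃ As : ℕ → Set Y, (∀ n, (As n).Infinite ∧ As n ⊆ A) ∧
      ∀ U ∈ nhds y, ∃ n, As n ⊆ U

/-- `Cp X`: continuous real-valued functions on `X` with the topology of pointwise
convergence. -/
def Cp (X : Set ℝ) : Type := {f : X → ℝ // Continuous f}

instance (X : Set ℝ) : TopologicalSpace (Cp X) :=
  instTopologicalSpaceSubtype

/-- `X ⊆ ℝ` has strong measure zero: for every sequence of positive reals `ε n` there is a
cover of `X` by intervals `I n` with length `< ε n`. -/
def StrongMeasureZeroSet (X : Set ℝ) : Prop :=
  ∀ ε : ℕ → ℝ, (∀ n, 0 < ε n) →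
    ∃ a b : ℕ → ℝ, (∀ n, b n - a n < ε n) ∧ X ⊆ ⋃ n, Set.Icc (a n) (b n)

open Metric Set Filter





noncomputable section
namespace SMZaux

variable (ε : ℕ → ℝ)

/-- number of centers for tag τ -/
def kk (τ : ℕ) : ℕ := τ.unpair.1 + 1

/-- budget minimum for tag τ -/
def dd (τ : ℕ) : ℝ :=
  (Finset.range (kk τ)).inf' (by simp [kk]) (fun j => ε (Nat.pair τ j))

/-- radius -/
def rr (τ : ℕ) : ℝ := min (dd ε τ / 4) 1

/-- grid spacing -/
def ss (τ : ℕ) : ℝ := rr ε τ / 4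

/-- grid bound -/
def BB (τ : ℕ) : ℤ := ⌈((τ.unpair.2 : ℝ) + 1) / ss ε τ⌉

/-- center determined by an integer -/
def ctr (τ : ℕ) (z : ℤ) : ℝ := (z : ℝ) * ss ε τ

/-- the bump function for tag τ and selection S -/
def FF (τ : ℕ) (S : Fin (kk τ) → ℤ) : ℝ → ℝ := fun y =>
  ((τ : ℝ) + 1) *
    min 1 ((2 / rr ε τ) * max 0 (infDist y (range fun j => ctr ε τ (S j)) - rr ε τ / 2))

variable {ε}

theorem dd_pos (hε : ∀ n, 0 < ε n) (τ : ℕ) : 0 < dd ε τ := by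
  rw [dd]; refine (Finset.lt_inf'_iff _).2 ?_
  exact fun j _ => hε _

theorem dd_le {τ j : ℕ} (hj : j < kk τ) : dd ε τ ≤ ε (Nat.pair τ j) :=
  Finset.inf'_le _ (Finset.mem_range.2 hj)

theorem rr_pos (hε : ∀ n, 0 < ε n) (τ : ℕ) : 0 < rr ε τ := lt_min (by linarith [dd_pos hε τ]) one_pos

theorem rr_le_one (τ : ℕ) : rr ε τ ≤ 1 := min_le_right _ _

theorem two_rr_lt (hε : ∀ n, 0 < ε n) {τ j : ℕ} (hj : j < kk τ) : 2 * rr ε τ < ε (Nat.pair τ j) := by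
  have h1 : rr ε τ ≤ dd ε τ / 4 := min_le_left _ _
  have := dd_pos hε τ
  have := dd_le (ε := ε) hj
  linarith

theorem ss_pos (hε : ∀ n, 0 < ε n) (τ : ℕ) : 0 < ss ε τ := by
  have := rr_pos hε τ; rw [ss]; linarith

theorem continuous_FF (τ : ℕ) (S : Fin (kk τ) → ℤ) : Continuous (FF ε τ S) := by
  apply continuous_const.mul
  apply continuous_const.min
  apply continuous_const.mul
  apply continuous_const.max
  exact (continuous_infDist_pt _).sub continuous_const

variable (ε) in
/-- the element of Cp X -/
def gg (X : Set ℝ) (τ : ℕ) (S : Fin (kk τ) → ℤ) : Cp X :=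
  ⟨fun x => FF ε τ S x, (continuous_FF τ S).comp continuous_subtype_val⟩

variable (ε) in
def Aset (X : Set ℝ) (τ : ℕ) : Set (Cp X) := gg ε X τ '' {S | ∀ j, |S j| ≤ BB ε τ}

variable (ε) in
def Abig (X : Set ℝ) : Set (Cp X) := ⋃ τ, Aset ε X τ

theorem finite_Aset (X : Set ℝ) (τ : ℕ) : (Aset ε X τ).Finite := by
  apply Set.Finite.image
  have hsub : {S : Fin (kk τ) → ℤ | ∀ j, |S j| ≤ BB ε τ} ⊆
      Set.pi Set.univ (fun _ : Fin (kk τ) => {z : ℤ | |z| ≤ BB ε τ}) := fun S hS j _ => hS j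
  refine Set.Finite.subset (Set.Finite.pi fun j => ?_) hsub
  have : {z : ℤ | |z| ≤ BB ε τ} = ↑(Finset.Icc (-(BB ε τ)) (BB ε τ)) := by ext z; simp [abs_le]
  rw [this]; exact Finset.finite_toSet _

/-- Key: if the bump is < 1 at y, then y is within rr of some center. -/
theorem near_center (hε : ∀ n, 0 < ε n) {τ : ℕ} {S : Fin (kk τ) → ℤ} {y : ℝ} (hy : |FF ε τ S y| < 1) :
    ∃ j : Fin (kk τ), dist y (ctr ε τ (S j)) < rr ε τ := by
  have hr := rr_pos hε τ
  set d := infDist y (range fun j => ctr ε τ (S j)) with hd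
  have hτ1 : (1 : ℝ) ≤ (τ : ℝ) + 1 := by have : (0:ℝ) ≤ (τ:ℝ) := Nat.cast_nonneg τ; linarith
  have hm0 : 0 ≤ min 1 ((2 / rr ε τ) * max 0 (d - rr ε τ / 2)) :=
    le_min zero_le_one (mul_nonneg (by positivity) (le_max_left _ _))
  have hFFeq : FF ε τ S y = ((τ : ℝ) + 1) * min 1 ((2 / rr ε τ) * max 0 (d - rr ε τ / 2)) := rfl
  have hFF : FF ε τ S y < 1 := lt_of_abs_lt hy
  have hmin : min 1 ((2 / rr ε τ) * max 0 (d - rr ε τ / 2)) < 1 := by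
    nlinarith [hFFeq ▸ hFF]
  have hz : (2 / rr ε τ) * max 0 (d - rr ε τ / 2) < 1 := by
    rcases min_lt_iff.1 hmin with h | h
    · linarith
    · exact h
  have hmax : max 0 (d - rr ε τ / 2) < rr ε τ / 2 := by
    by_contra hcon
    push_neg at hcon
    have h2 : (2 / rr ε τ) * (rr ε τ / 2) ≤ (2 / rr ε τ) * max 0 (d - rr ε τ / 2) :=
      mul_le_mul_of_nonneg_left hcon (by positivity)
    have h1 : (2 / rr ε τ) * (rr ε τ / 2) = 1 := by field_simp
    linarith
  have hdr : d < rr ε τ := by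
    have := le_max_right 0 (d - rr ε τ / 2)
    linarith
  have hne : (range fun j : Fin (kk τ) => ctr ε τ (S j)).Nonempty := by
    refine ⟨ctr ε τ (S ⟨0, by simp [kk]⟩), mem_range_self _⟩
  obtain ⟨z, hz1, hz2⟩ := (infDist_lt_iff hne).1 (hd ▸ hdr)
  obtain ⟨j, rfl⟩ := hz1
  exact ⟨j, hz2⟩

/-- Key: bump vanishes at points within ss/2-reach... actually within rr/2 of a center. -/
theorem FF_eq_zero {τ : ℕ} {S : Fin (kk τ) → ℤ} {y : ℝ} (j : Fin (kk τ))
    (hy : dist y (ctr ε τ (S j)) ≤ rr ε τ / 2) : FF ε τ S y = 0 := by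
  have hd : infDist y (range fun j => ctr ε τ (S j)) ≤ rr ε τ / 2 :=
    le_trans (infDist_le_dist_of_mem (mem_range_self j)) hy
  have : max 0 (infDist y (range fun j => ctr ε τ (S j)) - rr ε τ / 2) = 0 := by
    rw [max_eq_left]; linarith
  rw [FF, this, mul_zero, min_eq_right (zero_le_one' ℝ), mul_zero]


/-- For any finite set of reals, some admissible bump vanishes on it. -/
theorem exists_zero_on (hε : ∀ n, 0 < ε n) {J : Set ℝ} (hJ : J.Finite) :
    ∃ τ : ℕ, ∃ S : Fin (kk τ) → ℤ, (∀ j, |S j| ≤ BB ε τ) ∧ ∀ x ∈ J, FF ε τ S x = 0 := by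
  classical
  set Jf := hJ.toFinset with hJf
  set M : ℝ := Jf.sum (fun y => |y|) with hM
  have hbd : ∀ x ∈ Jf, |x| ≤ M := fun x hx =>
    Finset.single_le_sum (f := fun y => |y|) (fun y _ => abs_nonneg y) hx
  set u : ℕ := ⌈M⌉₊ with hu
  set τ : ℕ := Nat.pair Jf.card u with hτ
  have hunp : τ.unpair = (Jf.card, u) := Nat.unpair_pair _ _
  have hkk : Jf.card < kk τ := by simp [kk, hunp]
  have hs := ss_pos hε τ
  have hs4 : ss ε τ ≤ 1/4 := by
    have := rr_le_one (ε := ε) τ; rw [ss]; linarith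
  have habs : ∀ (z : ℝ), |(round z : ℝ)| ≤ |z| + 1/2 := by
    intro z
    have h2 := abs_sub_round z
    have h3 : (round z : ℝ) = z - (z - round z) := by ring
    calc |(round z : ℝ)| = |z - (z - (round z : ℝ))| := by rw [← h3]
      _ ≤ |z| + |z - (round z : ℝ)| := abs_sub _ _
      _ ≤ |z| + 1/2 := by linarith
  set S : Fin (kk τ) → ℤ := fun j =>
    if h : (j : ℕ) < Jf.card then round ((Jf.equivFin.symm ⟨j, h⟩ : ℝ) / ss ε τ) else 0
    with hS
  have hBB0 : (0:ℝ) ≤ ((u:ℝ)+1) / ss ε τ := by positivity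
  have hBBτ : BB ε τ = ⌈((u:ℝ)+1) / ss ε τ⌉ := by rw [BB, hunp]
  refine ⟨τ, S, ?_, ?_⟩
  · intro j
    by_cases hlt : (j : ℕ) < Jf.card
    · simp only [hS, dif_pos hlt]
      set x : ℝ := (Jf.equivFin.symm ⟨j, hlt⟩ : ℝ) with hx
      have hxJ : x ∈ Jf := (Jf.equivFin.symm ⟨j, hlt⟩).2
      have hxu : |x| ≤ (u : ℝ) := le_trans (hbd x hxJ) (Nat.le_ceil M)
      have h3 : |x / ss ε τ| ≤ (u : ℝ) / ss ε τ := by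
        rw [abs_div, abs_of_pos hs]
        exact (div_le_div_iff_of_pos_right hs).2 hxu
      have h4 : (u : ℝ) / ss ε τ + 1/2 ≤ ((u:ℝ)+1) / ss ε τ := by
        have h5 : (1:ℝ)/2 ≤ 1 / ss ε τ := by
          rw [div_le_div_iff₀ (by norm_num) hs]; linarith
        have h6 : ((u:ℝ)+1) / ss ε τ = (u : ℝ) / ss ε τ + 1 / ss ε τ := by ring
        linarith
      have h7 : |(round (x / ss ε τ) : ℝ)| ≤ ((u:ℝ)+1) / ss ε τ := by
        have := habs (x / ss ε τ); linarith
      rw [hBBτ]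
      have h8 := le_trans h7 (Int.le_ceil (((u:ℝ)+1) / ss ε τ))
      exact_mod_cast h8
    · simp only [hS, dif_neg hlt, abs_zero]
      rw [hBBτ]
      exact Int.ceil_nonneg hBB0
  · -- vanishing on J
    intro x hxJ
    have hxf : x ∈ Jf := by rwa [hJf, Set.Finite.mem_toFinset]
    set j0 : Fin Jf.card := Jf.equivFin ⟨x, hxf⟩ with hj0
    have hj0k : (j0 : ℕ) < kk τ := lt_trans j0.2 hkk
    set j : Fin (kk τ) := ⟨j0, hj0k⟩ with hj
    have hjval : S j = round (x / ss ε τ) := by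
      have hlt : ((j : ℕ)) < Jf.card := j0.2
      simp only [hS]
      rw [dif_pos hlt]
      congr 1
      have : (⟨(j : ℕ), hlt⟩ : Fin Jf.card) = j0 := rfl
      rw [this, hj0, Equiv.symm_apply_apply]
    apply FF_eq_zero j
    rw [hjval]
    have hr := rr_pos hε τ
    set q : ℤ := round (x / ss ε τ) with hq
    have hd : dist x (ctr ε τ q) = |x / ss ε τ - (q:ℝ)| * ss ε τ := by
      rw [Real.dist_eq, ctr]
      have heq : x - (q:ℝ) * ss ε τ = (x / ss ε τ - (q:ℝ)) * ss ε τ := by field_simp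
      rw [heq, abs_mul, abs_of_pos hs]
    have h9 : |x / ss ε τ - (q:ℝ)| ≤ 1/2 := abs_sub_round _
    have h10 : dist x (ctr ε τ q) ≤ (1/2) * ss ε τ := by
      rw [hd]
      exact mul_le_mul_of_nonneg_right h9 hs.le
    have : ss ε τ = rr ε τ / 4 := rfl
    linarith


/-- From an injectively-tagged family of center selections that covers `X`, build the SMZ cover. -/
theorem cover_out (hε : ∀ n, 0 < ε n) (X : Set ℝ) (t : ℕ → ℕ) (σ : ℕ → ℕ → ℤ)
    (huniq : ∀ m m', t m = t m' → σ m = σ m')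
    (hcov : ∀ x ∈ X, ∃ m j, j < kk (t m) ∧ dist x (ctr ε (t m) (σ m j)) < rr ε (t m)) :
    ∃ a b : ℕ → ℝ, (∀ n, b n - a n < ε n) ∧ X ⊆ ⋃ n, Set.Icc (a n) (b n) := by
  classical
  set P : ℕ → Prop := fun n => ∃ m, t m = n.unpair.1 ∧ n.unpair.2 < kk n.unpair.1 with hP
  set C : ℕ → ℝ := fun n =>
    if h : P n then ctr ε n.unpair.1 (σ h.choose n.unpair.2) else 0 with hC
  set R : ℕ → ℝ := fun n => if P n then rr ε n.unpair.1 else ε n / 4 with hR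
  refine ⟨fun n => C n - R n, fun n => C n + R n, ?_, ?_⟩
  · intro n
    have hle : C n + R n - (C n - R n) = 2 * R n := by ring
    rw [hle]
    by_cases hPn : P n
    · obtain ⟨m, hm1, hm2⟩ := hPn
      have h2 := two_rr_lt hε (ε := ε) hm2
      rw [Nat.pair_unpair n] at h2
      have hRe : R n = rr ε n.unpair.1 := if_pos ⟨m, hm1, hm2⟩
      rw [hRe]; exact h2
    · have hRe : R n = ε n / 4 := if_neg hPn
      rw [hRe]; have := hε n; linarith
  · intro x hx
    obtain ⟨m, j, hj, hdist⟩ := hcov x hx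
    set n : ℕ := Nat.pair (t m) j with hn
    have hup1 : n.unpair.1 = t m := by rw [hn, Nat.unpair_pair]
    have hup2 : n.unpair.2 = j := by rw [hn, Nat.unpair_pair]
    have hPn : P n := ⟨m, by rw [hup1], by rw [hup1, hup2]; exact hj⟩
    have hσ : σ hPn.choose = σ m := by
      apply huniq
      rw [hPn.choose_spec.1, hup1]
    refine Set.mem_iUnion.2 ⟨n, ?_⟩
    have hCn : C n = ctr ε (t m) (σ m j) := by
      have h1 : C n = ctr ε n.unpair.1 (σ hPn.choose n.unpair.2) := dif_pos hPn
      rw [h1, hσ, hup1, hup2]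
    have hRn : R n = rr ε (t m) := by
      have h1 : R n = rr ε n.unpair.1 := if_pos hPn
      rw [h1, hup1]
    rw [Real.dist_eq] at hdist
    have habs := abs_sub_lt_iff.1 hdist
    constructor
    · show C n - R n ≤ x
      rw [hCn, hRn]; linarith [habs.2]
    · show x ≤ C n + R n
      rw [hCn, hRn]; linarith [habs.1]


variable (X : Set ℝ)

def y0 : Cp X := ⟨fun _ => 0, continuous_const⟩

theorem eval_nhds (x : X) : {g : Cp X | |g.1 x| < 1} ∈ nhds (y0 X) := by
  have htop : nhds (y0 X) = Filter.comap Subtype.val (nhds ((y0 X).val)) := nhds_induced _ _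
  rw [htop]
  have heq : {g : Cp X | |g.1 x| < 1} = Subtype.val ⁻¹' {g : X → ℝ | |g x| < 1} := rfl
  rw [heq]
  apply Filter.preimage_mem_comap
  have hopen : IsOpen {g : X → ℝ | |g x| < 1} :=
    isOpen_lt (continuous_abs.comp (continuous_apply x)) continuous_const
  exact hopen.mem_nhds (show |(0:ℝ)| < 1 by norm_num)

theorem nhds_zero_finite_support {U : Set (Cp X)} (hU : U ∈ nhds (y0 X)) :
    ∃ I : Set X, I.Finite ∧ ∀ f : Cp X, (∀ x ∈ I, f.1 x = 0) → f ∈ U := by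
  rw [show nhds (y0 X) = Filter.comap Subtype.val (nhds ((y0 X).val)) from nhds_induced _ _] at hU
  obtain ⟨V, hV, hVU⟩ := Filter.mem_comap.1 hU
  rw [nhds_pi] at hV
  obtain ⟨I, hIfin, W, hW, hIW⟩ := Filter.mem_pi.1 hV
  refine ⟨I, hIfin, fun f hf => hVU (hIW ?_)⟩
  intro i hi
  rw [hf i hi]
  exact mem_of_mem_nhds (hW i)

theorem main (h : PytkeevProperty (Cp X)) : StrongMeasureZeroSet X := by
  classical
  intro ε hε
  by_cases hz : ∃ τ : ℕ, ∃ S : Fin (kk τ) → ℤ, (∀ j, |S j| ≤ BB ε τ) ∧ gg ε X τ S = y0 X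
  · obtain ⟨τ, S, hSb, hgg⟩ := hz
    apply cover_out hε X (fun _ => τ) (fun m j => if h : j < kk τ then S ⟨j, h⟩ else 0)
    · intro m m' _; rfl
    · intro x hx
      have hFF : FF ε τ S x = 0 := congrFun (congrArg Subtype.val hgg) ⟨x, hx⟩
      have hlt : |FF ε τ S x| < 1 := by rw [hFF]; norm_num
      obtain ⟨j, hj⟩ := near_center hε hlt
      refine ⟨0, j, j.2, ?_⟩
      simpa [dif_pos j.2] using hj
  · push_neg at hz
    have hcl : y0 X ∈ closure (Abig ε X \ {y0 X}) := by
      rw [mem_closure_iff_nhds]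
      intro U hU
      obtain ⟨I, hIfin, hIU⟩ := nhds_zero_finite_support X hU
      obtain ⟨τ, S, hSb, hS0⟩ := exists_zero_on hε (Set.Finite.image Subtype.val hIfin)
      refine ⟨gg ε X τ S, hIU _ (fun x hxI => hS0 x.1 ⟨x, hxI, rfl⟩),
        Set.mem_iUnion.2 ⟨τ, ⟨S, hSb, rfl⟩⟩, ?_⟩
      simp only [Set.mem_singleton_iff]
      exact hz τ S hSb
    obtain ⟨Bs, hBs, hBU⟩ := h (y0 X) (Abig ε X) hcl
    have pick : ∀ m N, ∃ τ, N < τ ∧ (Bs m ∩ Aset ε X τ).Nonempty := by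
      intro m N
      have hfin : (⋃ τ ∈ Set.Iic N, Aset ε X τ).Finite :=
        (Set.finite_Iic N).biUnion (fun τ _ => finite_Aset X τ)
      obtain ⟨f, hf1, hf2⟩ := ((hBs m).1.diff hfin).nonempty
      obtain ⟨τ, hfτ⟩ := Set.mem_iUnion.1 ((hBs m).2 hf1)
      refine ⟨τ, ?_, f, hf1, hfτ⟩
      by_contra hle
      push_neg at hle
      exact hf2 (Set.mem_biUnion hle hfτ)
    let T : ℕ → ℕ := fun m => Nat.rec (pick 0 0).choose (fun m ih => (pick (m+1) ih).choose) m
    have hTsucc : ∀ m, T m < T (m+1) := fun m => (pick (m+1) (T m)).choose_spec.1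
    have hTmono : StrictMono T := strictMono_nat_of_lt_succ hTsucc
    have hTmem : ∀ m, (Bs m ∩ Aset ε X (T m)).Nonempty := by
      intro m
      cases m with
      | zero => exact (pick 0 0).choose_spec.2
      | succ m => exact (pick (m+1) (T m)).choose_spec.2
    have hsel : ∀ m, ∃ S : Fin (kk (T m)) → ℤ,
        (∀ j, |S j| ≤ BB ε (T m)) ∧ gg ε X (T m) S ∈ Bs m := by
      intro m
      obtain ⟨f, hfB, S, hSb, hfS⟩ := hTmem m
      exact ⟨S, hSb, by rwa [hfS]⟩
    choose Sm hSmb hSmB using hsel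
    apply cover_out hε X T (fun m j => if h : j < kk (T m) then Sm m ⟨j, h⟩ else 0)
    · intro m m' hTm
      have hmm : m = m' := hTmono.injective hTm
      subst hmm; rfl
    · intro x hx
      obtain ⟨m, hm⟩ := hBU _ (eval_nhds X ⟨x, hx⟩)
      have hFF : |FF ε (T m) (Sm m) x| < 1 := hm (hSmB m)
      obtain ⟨j, hj⟩ := near_center hε hFF
      refine ⟨m, j, j.2, ?_⟩
      simpa [dif_pos j.2] using hj

end SMZaux


/-- If `C_p(X)` has the Pytkeev property, then `X` has strong measure zero. -/
theorem strongMeasureZero_of_pytkeev (X : Set ℝ) (h : PytkeevProperty (Cp X)) :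
    StrongMeasureZeroSet X :=
  SMZaux.main X h
end
end

section
/- If κ is a measurable cardinal, then there exists a monotonically normal topological space X with Δ(X) = κ such that no subspace of X is ω₁-resolvable. -/
open Cardinal

/-- A space is `κ`-resolvable if it contains `κ` pairwise disjoint dense subsets. -/
def Resolvable (X : Type*) [TopologicalSpace X] (κ : Cardinal) : Prop :=
  ∃ D : Set (Set X), #D = κ ∧ (∀ d ∈ D, Dense d) ∧ D.PairwiseDisjoint id

/-- `Δ(X)`: the minimum cardinality of a nonempty open subset of `X`. -/
noncomputable def Delta (X : Type*) [TopologicalSpace X] : Cardinal :=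
  sInf {c : Cardinal | ∃ U : Set X, IsOpen U ∧ U.Nonempty ∧ #U = c}

/-- `X` is maximally resolvable if it is `Δ(X)`-resolvable. -/
def MaximallyResolvable (X : Type*) [TopologicalSpace X] : Prop :=
  Resolvable X (Delta X)

/-- A (T₁) space is monotonically normal if there is an operator H assigning to each pair
(x, U) with x ∈ U open an open set H x U with x ∈ H x U ⊆ U, such that
H x U ∩ H y V ≠ ∅ implies x ∈ V or y ∈ U. -/
def MonotonicallyNormal (X : Type*) [TopologicalSpace X] : Prop :=
  ∃ H : X → Set X → Set X,
    (∀ x U, IsOpen U → x ∈ U → IsOpen (H x U) ∧ x ∈ H x U ∧ H x U ⊆ U) ∧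
    (∀ x U y V, IsOpen U → x ∈ U → IsOpen V → y ∈ V →
      (H x U ∩ H y V).Nonempty → x ∈ V ∨ y ∈ U)

/-- A space is crowded if it has no isolated points. -/
def Crowded (X : Type*) [TopologicalSpace X] : Prop :=
  ∀ x : X, Filter.NeBot (nhdsWithin x {x}ᶜ)

/-- κ is a measurable cardinal: there is a κ-complete nonprincipal ultrafilter on a set
of cardinality κ. -/
def IsMeasurableCardinal (κ : Cardinal) : Prop :=
  ∃ (α : Type) (_ : #α = κ) (U : Ultrafilter α),
    (¬ ∃ a : α, (U : Filter α) = pure a) ∧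
    ∀ s : Set (Set α), #s < κ → (∀ t ∈ s, t ∈ U) → ⋂₀ s ∈ U

namespace TreeUF

variable {α : Type} (U : Ultrafilter α)

/-- The ultrafilter tree topology on `List α`: a set `V` is open iff every `s ∈ V` has
`U`-many immediate successors in `V`. -/
def treeTop : TopologicalSpace (List α) where
  IsOpen V := ∀ s ∈ V, {a | s ++ [a] ∈ V} ∈ U
  isOpen_univ := fun s _ => by
    have h : {a | s ++ [a] ∈ (Set.univ : Set (List α))} = Set.univ := by ext; simp
    rw [h]; exact Filter.univ_mem
  isOpen_inter := fun V W hV hW s hs => by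
    have h := Filter.inter_mem (hV s hs.1) (hW s hs.2)
    refine Filter.mem_of_superset h ?_
    intro a ha; exact ⟨ha.1, ha.2⟩
  isOpen_sUnion := fun 𝒮 h s hs => by
    obtain ⟨V, hV𝒮, hsV⟩ := hs
    refine Filter.mem_of_superset (h V hV𝒮 s hsV) ?_
    intro a ha; exact ⟨V, hV𝒮, ha⟩

/-- The monotone normality operator: all initial segments of `w` from level `|s|` on
must lie in `V`. -/
def mnOp (s : List α) (V : Set (List α)) : Set (List α) :=
  {w | s <+: w ∧ ∀ i, s.length ≤ i → i ≤ w.length → w.take i ∈ V}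

lemma mem_mnOp_self {s : List α} {V : Set (List α)} (h : s ∈ V) : s ∈ mnOp s V := by
  refine ⟨List.prefix_refl s, fun i h1 h2 => ?_⟩
  have : i = s.length := le_antisymm h2 h1
  rw [this, List.take_length]; exact h

lemma mnOp_subset {s : List α} {V : Set (List α)} : mnOp s V ⊆ V := by
  intro w hw
  have := hw.2 w.length hw.1.length_le le_rfl
  rwa [List.take_length] at this

lemma mnOp_isOpen {s : List α} {V : Set (List α)}
    (hV : @IsOpen _ (treeTop U) V) : @IsOpen _ (treeTop U) (mnOp s V) := by
  intro t ht
  have htV : t ∈ V := mnOp_subset ht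
  refine Filter.mem_of_superset (hV t htV) ?_
  intro a (ha : t ++ [a] ∈ V)
  refine ⟨ht.1.trans (List.prefix_append t [a]), fun i h1 h2 => ?_⟩
  rw [List.length_append, List.length_singleton] at h2
  rcases Nat.lt_or_ge i (t.length + 1) with hi | hi
  · have hi' : i ≤ t.length := Nat.lt_succ_iff.mp hi
    rw [List.take_append_of_le_length hi']
    exact ht.2 i h1 hi'
  · have hieq : i = t.length + 1 := le_antisymm h2 hi
    have : (t ++ [a]).take i = t ++ [a] := by
      apply List.take_of_length_le
      simp [hieq]
    rw [this]; exact ha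

lemma mnOp_key {x y z : List α} {V W : Set (List α)}
    (hz1 : z ∈ mnOp x V) (hz2 : z ∈ mnOp y W) : x ∈ W ∨ y ∈ V := by
  rcases le_total x.length y.length with h | h
  · right
    have := hz1.2 y.length h hz2.1.length_le
    rwa [← List.prefix_iff_eq_take.mp hz2.1] at this
  · left
    have := hz2.2 x.length h hz1.1.length_le
    rwa [← List.prefix_iff_eq_take.mp hz1.1] at this

lemma singleton_compl_mem (hnp : ¬ ∃ a : α, (U : Filter α) = pure a) (a : α) :
    ({a}ᶜ : Set α) ∈ U := by
  rw [Ultrafilter.compl_mem_iff_notMem]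
  intro h
  refine hnp ⟨a, Filter.ext fun s => ?_⟩
  constructor
  · intro hs
    obtain ⟨x, hx⟩ := Filter.nonempty_of_mem (Filter.inter_mem h hs)
    have hxa : x = a := hx.1
    simpa [Filter.mem_pure, ← hxa] using hx.2
  · intro hs
    exact Filter.mem_of_superset h (by simpa [Set.singleton_subset_iff] using hs)

lemma infinite_of_np (hnp : ¬ ∃ a : α, (U : Filter α) = pure a) : Infinite α := by
  by_contra h
  have : Finite α := not_infinite_iff_finite.mp h
  have hmem : (⋂ a : α, ({a}ᶜ : Set α)) ∈ U :=
    Filter.iInter_mem.mpr (fun a => singleton_compl_mem U hnp a)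
  have hempty : (⋂ a : α, ({a}ᶜ : Set α)) = ∅ := by
    ext x; simp
  rw [hempty] at hmem
  exact Filter.empty_notMem (U : Filter α) hmem

/-- Every member of a `#α`-complete nonprincipal ultrafilter has full size. -/
lemma mk_mem (hnp : ¬ ∃ a : α, (U : Filter α) = pure a)
    (hc : ∀ s : Set (Set α), #s < #α → (∀ t ∈ s, t ∈ U) → ⋂₀ s ∈ U)
    {B : Set α} (hB : B ∈ U) : #α ≤ #B := by
  by_contra h
  push_neg at h
  have hs : #((fun b => ({b}ᶜ : Set α)) '' B) < #α := lt_of_le_of_lt (Cardinal.mk_image_le) h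
  have hmem : ⋂₀ ((fun b => ({b}ᶜ : Set α)) '' B) ∈ U := by
    refine hc _ hs ?_
    rintro t ⟨b, _, rfl⟩
    exact singleton_compl_mem U hnp b
  have hEq : ⋂₀ ((fun b => ({b}ᶜ : Set α)) '' B) = Bᶜ := by
    ext x
    simp [Set.mem_sInter]
    constructor
    · intro hx hxB; exact hx x hxB rfl
    · intro hx b hb hbx; exact hx (hbx ▸ hb)
  rw [hEq] at hmem
  have := Filter.inter_mem hB hmem
  rw [Set.inter_compl_self] at this
  exact Filter.empty_notMem (U : Filter α) this

lemma t1 (hnp : ¬ ∃ a : α, (U : Filter α) = pure a) :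
    @T1Space _ (treeTop U) := by
  letI : TopologicalSpace (List α) := treeTop U
  constructor
  intro x
  rw [← isOpen_compl_iff]
  intro s hs
  by_cases hex : ∃ a₀ : α, s ++ [a₀] = x
  · obtain ⟨a₀, ha₀⟩ := hex
    refine Filter.mem_of_superset (singleton_compl_mem U hnp a₀) ?_
    intro a ha hEq
    apply ha
    have h1 : s ++ [a] = s ++ [a₀] := by rw [ha₀]; exact hEq
    have := List.append_cancel_left h1
    simpa using this
  · refine Filter.mem_of_superset Filter.univ_mem ?_
    intro a _ hEq
    exact hex ⟨a, hEq⟩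

/-- The closure iteration: one-step `U`-limits. -/
def clIter : ℕ → Set (List α) → Set (List α)
  | 0, D => D
  | (n+1), D => clIter n D ∪ {s | {a | s ++ [a] ∈ clIter n D} ∈ U}

lemma closure_subset_iUnion
    (hcc : ∀ T : ℕ → Set α, (∀ n, T n ∈ U) → (⋂ n, T n) ∈ U)
    (D : Set (List α)) :
    @closure _ (treeTop U) D ⊆ ⋃ n, clIter U n D := by
  letI : TopologicalSpace (List α) := treeTop U
  refine closure_minimal (Set.subset_iUnion (fun n => clIter U n D) 0) ?_
  rw [← isOpen_compl_iff]
  intro s hs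
  by_contra hmem
  have h1 : {a | s ++ [a] ∈ ⋃ n, clIter U n D} ∈ U := by
    have h := Ultrafilter.compl_mem_iff_notMem.mpr hmem
    have hEq : {a | s ++ [a] ∈ (⋃ n, clIter U n D)ᶜ}ᶜ
        = {a | s ++ [a] ∈ ⋃ n, clIter U n D} := by
      ext a; simp
    rwa [hEq] at h
  have h2 : ∃ n, {a | s ++ [a] ∈ clIter U n D} ∈ U := by
    by_contra h
    push_neg at h
    have hint := hcc (fun n => {a | s ++ [a] ∈ clIter U n D}ᶜ)
      (fun n => Ultrafilter.compl_mem_iff_notMem.mpr (h n))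
    obtain ⟨a, ha⟩ := Filter.nonempty_of_mem (Filter.inter_mem hint h1)
    obtain ⟨n, han⟩ := Set.mem_iUnion.mp ha.2
    exact (Set.mem_iInter.mp ha.1 n) han
  obtain ⟨n, hn⟩ := h2
  exact hs (Set.mem_iUnion.mpr ⟨n + 1, Or.inr hn⟩)

/-- The key rank argument: an infinite pairwise disjoint family cannot have a common point
in the `n`-th closure iteration of each of its members. -/
lemma rank_false
    (hcc : ∀ T : ℕ → Set α, (∀ n, T n ∈ U) → (⋂ n, T n) ∈ U)
    {ι : Type*} (d : ι → Set (List α))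
    (hd : ∀ i j, i ≠ j → Disjoint (d i) (d j)) :
    ∀ (n : ℕ) (t : List α) (J : Set ι), J.Infinite →
      (∀ i ∈ J, t ∈ clIter U n (d i)) → False := by
  intro n
  induction n with
  | zero =>
    intro t J hJ h
    obtain ⟨i, hi, j, hj, hij⟩ := hJ.nontrivial
    exact Set.disjoint_left.mp (hd i j hij) (h i hi) (h j hj)
  | succ n ih =>
    intro t J hJ h
    have hsub : J ⊆ {i ∈ J | t ∈ clIter U n (d i)} ∪
        {i ∈ J | {a | t ++ [a] ∈ clIter U n (d i)} ∈ U} := by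
      intro i hi
      rcases h i hi with h' | h'
      · exact Or.inl ⟨hi, h'⟩
      · exact Or.inr ⟨hi, h'⟩
    rcases Set.infinite_union.mp (hJ.mono hsub) with h0 | h1
    · exact ih t _ h0 (fun i hi => hi.2)
    · have f : ℕ ↪ {i ∈ J | {a | t ++ [a] ∈ clIter U n (d i)} ∈ U} := h1.natEmbedding
      have hT : ∀ m : ℕ, {a | t ++ [a] ∈ clIter U n (d (f m).1)} ∈ U := fun m => (f m).2.2
      obtain ⟨a, ha⟩ := Filter.nonempty_of_mem (hcc _ hT)
      refine ih (t ++ [a]) (Subtype.val '' Set.range f) ?_ ?_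
      · exact ((Set.infinite_range_of_injective f.injective).image
          (Subtype.val_injective.injOn))
      · rintro i ⟨⟨i, hi⟩, ⟨m, hm⟩, rfl⟩
        have := Set.mem_iInter.mp ha m
        rwa [hm] at this

end TreeUF

/-- If κ is measurable then there is a monotonically normal space X with Δ(X) = κ such
that no subspace of X is ω₁-resolvable. -/
theorem exists_monotonicallyNormal_no_subspace_omega1_resolvable
    (κ : Cardinal) (hκ : IsMeasurableCardinal κ) :
    ∃ (X : Type) (_ : TopologicalSpace X), T1Space X ∧ MonotonicallyNormal X ∧
      Delta X = κ ∧ ∀ S : Set X, ¬ Resolvable S (Cardinal.aleph 1) := by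
  obtain ⟨α, hκα, U, hnp, hcomp⟩ := hκ
  subst hκα
  haveI : Infinite α := TreeUF.infinite_of_np U hnp
  letI : TopologicalSpace (List α) := TreeUF.treeTop U
  refine ⟨List α, TreeUF.treeTop U, TreeUF.t1 U hnp, ?_, ?_, ?_⟩
  · -- monotone normality
    refine ⟨TreeUF.mnOp, ?_, ?_⟩
    · intro x V hV hx
      exact ⟨TreeUF.mnOp_isOpen U hV, TreeUF.mem_mnOp_self hx, TreeUF.mnOp_subset⟩
    · rintro x V y W hV hx hW hy ⟨z, hz⟩
      exact TreeUF.mnOp_key hz.1 hz.2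
  · -- Delta = #α
    apply le_antisymm
    · apply csInf_le'
      exact ⟨Set.univ, isOpen_univ, ⟨[], trivial⟩,
        by rw [Cardinal.mk_univ, Cardinal.mk_list_eq_mk]⟩
    · refine le_csInf ⟨#(List α), Set.univ, isOpen_univ, ⟨[], trivial⟩, Cardinal.mk_univ⟩ ?_
      rintro c ⟨V, hV, ⟨s, hsV⟩, rfl⟩
      have hB : {a | s ++ [a] ∈ V} ∈ U := hV s hsV
      have h1 : #α ≤ #{a | s ++ [a] ∈ V} := TreeUF.mk_mem U hnp hcomp hB
      refine h1.trans ?_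
      refine Cardinal.mk_le_of_injective
        (f := fun a : {a | s ++ [a] ∈ V} => (⟨s ++ [a.1], a.2⟩ : V)) ?_
      intro a b hab
      have h2 : s ++ [a.1] = s ++ [b.1] := congrArg Subtype.val hab
      have := List.append_cancel_left h2
      exact Subtype.ext (by simpa using this)
  · -- no subspace is ω₁-resolvable
    intro S hres
    obtain ⟨D, hDcard, hDdense, hDdisj⟩ := hres
    rcases Set.eq_empty_or_nonempty S with hS | ⟨x0, hx0⟩
    · -- S empty: there are not even ℵ₁ subsets of S
      haveI : IsEmpty ↥S := by rw [hS]; exact Set.isEmpty_coe_sort.mpr rfl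
      have h1 : #D ≤ #(Set ↥S) := Cardinal.mk_set_le D
      have h2 : #(Set ↥S) = 1 := by
        rw [Cardinal.mk_set, Cardinal.mk_eq_zero, Cardinal.power_zero]
      rw [hDcard, h2] at h1
      exact absurd (h1.trans_lt Cardinal.one_lt_aleph0) (lt_asymm Cardinal.aleph0_lt_aleph_one)
    · haveI : Nonempty ↥S := ⟨⟨x0, hx0⟩⟩
      set d : ↥D → Set (List α) := fun i => Subtype.val '' (i.1 : Set ↥S) with hd_def
      have hd : ∀ i j : ↥D, i ≠ j → Disjoint (d i) (d j) := by
        intro i j hij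
        have hne : (i.1 : Set ↥S) ≠ j.1 := fun h => hij (Subtype.ext h)
        have := hDdisj i.2 j.2 hne
        exact (Set.disjoint_image_iff Subtype.val_injective).mpr this
      have hdense : ∀ i : ↥D, x0 ∈ closure (d i) := by
        intro i
        have := hDdense i.1 i.2 ⟨x0, hx0⟩
        exact closure_subtype.mp this
      by_cases hcount : Countable α
      · -- countable case: a cardinality contradiction
        haveI : Countable (List α) := inferInstance
        have hne : ∀ i : ↥D, (d i).Nonempty := by
          intro i
          obtain ⟨x, hx⟩ := (hDdense i.1 i.2).nonempty
          exact ⟨x, x, hx, rfl⟩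
        choose g hg using hne
        have hginj : Function.Injective g := by
          intro i j hij
          by_contra hne'
          exact Set.disjoint_left.mp (hd i j hne') (hg i) (hij ▸ hg j)
        have h1 : #D ≤ #(List α) := Cardinal.mk_le_of_injective hginj
        have h2 : #(List α) ≤ ℵ₀ := Cardinal.mk_le_aleph0
        rw [hDcard] at h1
        exact absurd ((h1.trans h2)) (not_le.mpr Cardinal.aleph0_lt_aleph_one)
      · -- uncountable case: the ultrafilter is countably complete; use the rank argument
        have haleph0 : ℵ₀ < #α := by
          rcases lt_or_ge ℵ₀ #α with h | h
          · exact h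
          · exact absurd (Cardinal.mk_le_aleph0_iff.mp h) hcount
        have hcc : ∀ T : ℕ → Set α, (∀ n, T n ∈ U) → (⋂ n, T n) ∈ U := by
          intro T hT
          have hr : #(Set.range T) < #α :=
            lt_of_le_of_lt (Cardinal.mk_range_le.trans_eq Cardinal.mk_nat) haleph0
          have := hcomp (Set.range T) hr (by rintro t ⟨n, rfl⟩; exact hT n)
          rwa [Set.sInter_range] at this
        have hcl : ∀ i : ↥D, ∃ n, x0 ∈ TreeUF.clIter U n (d i) := fun i =>
          Set.mem_iUnion.mp (TreeUF.closure_subset_iUnion U hcc (d i) (hdense i))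
        choose r hr using hcl
        have hfib : ∃ n, {i : ↥D | r i = n}.Infinite := by
          by_contra h
          push_neg at h
          have hcnt : (Set.univ : Set ↥D).Countable := by
            have hEq : (Set.univ : Set ↥D) = ⋃ n, {i : ↥D | r i = n} := by
              ext i; simp
            rw [hEq]
            exact Set.countable_iUnion (fun n => (h n).countable)
          haveI : Countable ↥D := Set.countable_univ_iff.mp hcnt
          have := Cardinal.mk_le_aleph0 (α := ↥D)
          rw [hDcard] at this
          exact absurd this (not_le.mpr Cardinal.aleph0_lt_aleph_one)
        obtain ⟨n, hn⟩ := hfib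
        refine TreeUF.rank_false U hcc d hd n x0 {i : ↥D | r i = n} hn ?_
        intro i hi
        have := hr i
        rwa [hi] at this
end

section
/- A linear order ℚ(κ) — a linear order of cardinality κ such that for any two subsets A, B each of size < κ with A < B pointwise there exists an element strictly between A and B — exists only if κ^{<κ} = κ. -/
open Cardinal Ordinal Set

section Wty

variable {β : Type} [LinearOrder β] [WellFoundedLT β]

/-- `typein` with the well-order instance supplied explicitly. -/
noncomputable def wty (x : β) : Ordinal := @typein β (· < ·) isWellOrder_lt x

/-- `type` with the well-order instance supplied explicitly. -/
noncomputable def wtype (β : Type) [LinearOrder β] [WellFoundedLT β] : Ordinal :=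
  @type β (· < ·) isWellOrder_lt

theorem wty_lt {x y : β} : wty x < wty y ↔ x < y := @typein_lt_typein β (· < ·) isWellOrder_lt x y

theorem wty_le {x y : β} : wty x ≤ wty y ↔ x ≤ y := by
  rw [wty, wty, @typein_le_typein β (· < ·) isWellOrder_lt, not_lt]

theorem wty_inj {x y : β} (h : wty x = wty y) : x = y := by
  by_contra hne
  rcases lt_or_gt_of_ne hne with hlt | hlt
  · exact absurd h (ne_of_lt (wty_lt.2 hlt))
  · exact absurd h.symm (ne_of_lt (wty_lt.2 hlt))

theorem wty_lt_type (x : β) : wty x < wtype β :=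
  @typein_lt_type β (· < ·) isWellOrder_lt x

theorem mk_lt_wty (x : β) : #{y : β // y < x} = (wty x).card :=
  (@card_typein β (· < ·) isWellOrder_lt x).symm

end Wty

theorem wty_lt_ord {κ : Cardinal.{0}} (j : κ.ord.ToType) : wty j < κ.ord := by
  have := wty_lt_type j
  rwa [wtype, type_toType] at this

theorem wty_card_lt {κ : Cardinal.{0}} (j : κ.ord.ToType) : (wty j).card < κ :=
  Cardinal.lt_ord.1 (wty_lt_ord j)

/-- Successor in `κ.ord.ToType`, for infinite `κ`. -/
noncomputable def osucc {κ : Cardinal.{0}} (hκ : ℵ₀ ≤ κ) (x : κ.ord.ToType) : κ.ord.ToType :=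
  @enum _ (· < ·) isWellOrder_lt ⟨wty x + 1, by
    rw [type_toType]
    exact (isSuccLimit_ord hκ).add_one_lt (wty_lt_ord x)⟩

theorem wty_osucc {κ : Cardinal.{0}} (hκ : ℵ₀ ≤ κ) (x : κ.ord.ToType) :
    wty (osucc hκ x) = wty x + 1 := @typein_enum _ (· < ·) isWellOrder_lt _ _

theorem lt_osucc {κ : Cardinal.{0}} (hκ : ℵ₀ ≤ κ) (x : κ.ord.ToType) : x < osucc hκ x := by
  rw [← wty_lt, wty_osucc]
  exact lt_add_one _

theorem osucc_le {κ : Cardinal.{0}} (hκ : ℵ₀ ≤ κ) {x y : κ.ord.ToType} (h : x < y) :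
    osucc hκ x ≤ y := by
  rw [← wty_le, wty_osucc]
  exact Order.add_one_le_of_lt (wty_lt.2 h)

section QAux

variable {α : Type} [LinearOrder α] [Nonempty α] {κ : Cardinal.{0}}

/-- The saturation property. -/
def QSat (α : Type) [LinearOrder α] (κ : Cardinal) : Prop :=
  ∀ A B : Set α, #A < κ → #B < κ → (∀ a ∈ A, ∀ b ∈ B, a < b) →
    ∃ x : α, (∀ a ∈ A, a < x) ∧ (∀ b ∈ B, x < b)

/-- A pair of sets forming a small cut. -/
def QGood (κ : Cardinal) (p : Set α × Set α) : Prop :=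
  #(p.1) < κ ∧ #(p.2) < κ ∧ ∀ a ∈ p.1, ∀ b ∈ p.2, a < b

theorem qpick_aux (hs : QSat α κ) (p : Set α × Set α) :
    ∃ x : α, QGood κ p → (∀ a ∈ p.1, a < x) ∧ (∀ b ∈ p.2, x < b) := by
  by_cases h : QGood κ p
  · obtain ⟨x, hx⟩ := hs p.1 p.2 h.1 h.2.1 h.2.2
    exact ⟨x, fun _ => hx⟩
  · exact ⟨Classical.arbitrary α, fun hg => absurd hg h⟩

noncomputable def qpick (hs : QSat α κ) (p : Set α × Set α) : α :=
  (qpick_aux hs p).choose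

theorem qpick_lt (hs : QSat α κ) {p : Set α × Set α} (h : QGood κ p) :
    ∀ a ∈ p.1, a < qpick hs p :=
  (((qpick_aux hs p).choose_spec) h).1

theorem qpick_gt (hs : QSat α κ) {p : Set α × Set α} (h : QGood κ p) :
    ∀ b ∈ p.2, qpick hs p < b :=
  (((qpick_aux hs p).choose_spec) h).2

/-- A transfinite increasing chain inside the cut `p`, of length `κ`. -/
noncomputable def qchain (hs : QSat α κ) (p : Set α × Set α) : κ.ord.ToType → α :=
  fun j => (IsWellFounded.wf (α := κ.ord.ToType) (r := (· < ·))).fix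
    (fun j ih => qpick hs
      (p.1 ∪ Set.range (fun x : {y : κ.ord.ToType // y < j} => ih x.1 x.2), p.2)) j

/-- The cut used at step `j` of the chain construction. -/
noncomputable def qcut (hs : QSat α κ) (p : Set α × Set α) (j : κ.ord.ToType) :
    Set α × Set α :=
  (p.1 ∪ Set.range (fun x : {y : κ.ord.ToType // y < j} => qchain hs p x.1), p.2)

theorem qchain_eq (hs : QSat α κ) (p : Set α × Set α) (j : κ.ord.ToType) :
    qchain hs p j = qpick hs (qcut hs p j) := by
  show (IsWellFounded.wf (α := κ.ord.ToType) (r := (· < ·))).fix _ j = _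
  rw [WellFounded.fix_eq]
  rfl

theorem qcut_good (hs : QSat α κ) (hκ : ℵ₀ ≤ κ) {p : Set α × Set α} (hp : QGood κ p) :
    ∀ j, QGood κ (qcut hs p j) := by
  intro j
  induction j using WellFoundedLT.induction with
  | ind j ih =>
    refine ⟨?_, hp.2.1, ?_⟩
    · apply lt_of_le_of_lt (mk_union_le _ _)
      apply Cardinal.add_lt_of_lt hκ hp.1
      apply lt_of_le_of_lt (mk_range_le)
      rw [mk_lt_wty j]
      exact wty_card_lt j
    · rintro a (ha | ⟨⟨x, hx⟩, rfl⟩) b hb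
      · exact hp.2.2 a ha b hb
      · show qchain hs p x < b
        rw [qchain_eq]
        exact qpick_gt hs (ih x hx) b hb

theorem qchain_gt_left (hs : QSat α κ) (hκ : ℵ₀ ≤ κ) {p : Set α × Set α} (hp : QGood κ p)
    (j : κ.ord.ToType) {a : α} (ha : a ∈ p.1) : a < qchain hs p j := by
  rw [qchain_eq]
  exact qpick_lt hs (qcut_good hs hκ hp j) a (Or.inl ha)

theorem qchain_lt_right (hs : QSat α κ) (hκ : ℵ₀ ≤ κ) {p : Set α × Set α} (hp : QGood κ p)
    (j : κ.ord.ToType) {b : α} (hb : b ∈ p.2) : qchain hs p j < b := by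
  rw [qchain_eq]
  exact qpick_gt hs (qcut_good hs hκ hp j) b hb

theorem qchain_strictMono (hs : QSat α κ) (hκ : ℵ₀ ≤ κ) {p : Set α × Set α} (hp : QGood κ p)
    {x j : κ.ord.ToType} (hxj : x < j) : qchain hs p x < qchain hs p j := by
  conv_rhs => rw [qchain_eq]
  exact qpick_lt hs (qcut_good hs hκ hp j) _ (Or.inr ⟨⟨x, hxj⟩, rfl⟩)

theorem qchain_mono (hs : QSat α κ) (hκ : ℵ₀ ≤ κ) {p : Set α × Set α} (hp : QGood κ p)
    {x j : κ.ord.ToType} (hxj : x ≤ j) : qchain hs p x ≤ qchain hs p j := by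
  rcases eq_or_lt_of_le hxj with rfl | h
  · exact le_rfl
  · exact (qchain_strictMono hs hκ hp h).le

variable {β : Type} [LinearOrder β] [WellFoundedLT β]

/-- The cut assigned to a branch `g` at level `i` of the tree construction. -/
noncomputable def qnode (hs : QSat α κ) (hκ : ℵ₀ ≤ κ) (g : β → κ.ord.ToType) :
    Ordinal.{0} → Set α × Set α :=
  WellFounded.fix Ordinal.lt_wf fun i ih =>
    (Set.range (fun j : {j : β // wty j < i} =>
        qchain hs (ih _ j.2) (g j.1)),
     Set.range (fun j : {j : β // wty j < i} =>
        qchain hs (ih _ j.2) (osucc hκ (g j.1))))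

theorem qnode_eq (hs : QSat α κ) (hκ : ℵ₀ ≤ κ) (g : β → κ.ord.ToType) (i : Ordinal.{0}) :
    qnode hs hκ g i =
      (Set.range (fun j : {j : β // wty j < i} =>
          qchain hs (qnode hs hκ g (wty j.1)) (g j.1)),
       Set.range (fun j : {j : β // wty j < i} =>
          qchain hs (qnode hs hκ g (wty j.1)) (osucc hκ (g j.1)))) := by
  show WellFounded.fix Ordinal.lt_wf _ i = _
  rw [WellFounded.fix_eq]
  rfl

theorem qnode_good (hs : QSat α κ) (hκ : ℵ₀ ≤ κ) (g : β → κ.ord.ToType) (hβ : #β < κ) :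
    ∀ i, QGood κ (qnode hs hκ g i) := by
  intro i
  induction i using Ordinal.induction with
  | h i ih =>
    rw [qnode_eq]
    refine ⟨lt_of_le_of_lt mk_range_le (lt_of_le_of_lt (mk_subtype_le _) hβ),
      lt_of_le_of_lt mk_range_le (lt_of_le_of_lt (mk_subtype_le _) hβ), ?_⟩
    rintro a ⟨⟨j, hj⟩, rfl⟩ b ⟨⟨j', hj'⟩, rfl⟩
    show qchain hs (qnode hs hκ g (wty j)) (g j) <
      qchain hs (qnode hs hκ g (wty j')) (osucc hκ (g j'))
    rcases lt_trichotomy (wty j) (wty j') with hlt | heq | hgt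
    · refine qchain_gt_left hs hκ (ih _ hj') _ ?_
      rw [qnode_eq]
      exact ⟨⟨j, hlt⟩, rfl⟩
    · have : j = j' := wty_inj heq
      subst this
      exact qchain_strictMono hs hκ (ih _ hj) (lt_osucc hκ (g j))
    · refine qchain_lt_right hs hκ (ih _ hj) _ ?_
      rw [qnode_eq]
      exact ⟨⟨j', hgt⟩, rfl⟩

theorem qnode_congr (hs : QSat α κ) (hκ : ℵ₀ ≤ κ) {g g' : β → κ.ord.ToType} :
    ∀ i : Ordinal.{0}, (∀ j : β, wty j < i → g j = g' j) →
      qnode hs hκ g i = qnode hs hκ g' i := by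
  intro i
  induction i using Ordinal.induction with
  | h i ih =>
    intro hgg
    have key : ∀ j : {j : β // wty j < i},
        qnode hs hκ g (wty j.1) = qnode hs hκ g' (wty j.1) := by
      rintro ⟨j, hj⟩
      exact ih _ hj (fun j'' hj'' => hgg j'' (hj''.trans hj))
    rw [qnode_eq hs hκ g i, qnode_eq hs hκ g' i]
    congr 1
    · apply congrArg
      funext j
      rw [key j, hgg j.1 j.2]
    · apply congrArg
      funext j
      rw [key j, hgg j.1 j.2]

/-- The point of `α` assigned to a branch `g`. -/
noncomputable def qembed (hs : QSat α κ) (hκ : ℵ₀ ≤ κ) (g : β → κ.ord.ToType) : α :=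
  qpick hs (qnode hs hκ g (wtype β))

theorem qembed_lt (hs : QSat α κ) (hκ : ℵ₀ ≤ κ) (hβ : #β < κ) {g g' : β → κ.ord.ToType}
    {j₀ : β} (hmin : ∀ j : β, j < j₀ → g j = g' j) (hlt : g j₀ < g' j₀) :
    qembed hs hκ g < qembed hs hκ g' := by
  have hj₀T : wty j₀ < wtype β := wty_lt_type j₀
  have hpp : qnode hs hκ g (wty j₀) = qnode hs hκ g' (wty j₀) :=
    qnode_congr hs hκ _ (fun j hj => hmin j (wty_lt.1 hj))
  set p := qnode hs hκ g (wty j₀) with hp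
  have hpgood : QGood κ p := qnode_good hs hκ g hβ _
  have h1 : qembed hs hκ g < qchain hs p (osucc hκ (g j₀)) := by
    refine qpick_gt hs (qnode_good hs hκ g hβ (wtype β)) _ ?_
    rw [qnode_eq]
    exact ⟨⟨j₀, hj₀T⟩, rfl⟩
  have h2 : qchain hs p (g' j₀) < qembed hs hκ g' := by
    refine qpick_lt hs (qnode_good hs hκ g' hβ (wtype β)) _ ?_
    rw [qnode_eq]
    refine ⟨⟨j₀, hj₀T⟩, ?_⟩
    exact congrArg (fun q => qchain hs q (g' j₀)) hpp.symm
  have h3 : qchain hs p (osucc hκ (g j₀)) ≤ qchain hs p (g' j₀) :=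
    qchain_mono hs hκ hpgood (osucc_le hκ hlt)
  exact ((lt_of_lt_of_le h1 h3).trans h2)

theorem qembed_injective (hs : QSat α κ) (hκ : ℵ₀ ≤ κ) (hβ : #β < κ) :
    Function.Injective (qembed hs hκ (β := β)) := by
  intro g g' hgg
  by_contra hne
  have hD : {j : β | g j ≠ g' j}.Nonempty := by
    rcases Function.ne_iff.1 hne with ⟨j, hj⟩
    exact ⟨j, hj⟩
  set wf := IsWellFounded.wf (α := β) (r := (· < ·)) with hwf
  set j₀ := wf.min _ hD with hj₀
  have hj₀D : g j₀ ≠ g' j₀ := wf.min_mem _ hD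
  have hmin : ∀ j : β, j < j₀ → g j = g' j := by
    intro j hj
    by_contra hc
    exact wf.not_lt_min _ hc hj
  rcases lt_trichotomy (g j₀) (g' j₀) with hlt | heq | hgt
  · exact absurd hgg (ne_of_lt (qembed_lt hs hκ hβ hmin hlt))
  · exact hj₀D heq
  · exact absurd hgg.symm
      (ne_of_lt (qembed_lt hs hκ hβ (fun j hj => (hmin j hj).symm) hgt))

theorem qpow_le (hs : QSat α κ) (hκ : ℵ₀ ≤ κ) (hα : #α = κ) {μ : Cardinal.{0}} (hμ : μ < κ) :
    κ ^ μ ≤ κ := by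
  have hβ : #μ.ord.ToType = μ := by rw [mk_toType, card_ord]
  have key : #(μ.ord.ToType → κ.ord.ToType) ≤ #α :=
    mk_le_of_injective (qembed_injective hs hκ (by rw [hβ]; exact hμ))
  rwa [← power_def, mk_ord_toType, hβ, hα] at key

end QAux

/-- If there is a linear order of cardinality κ such that for any two subsets A, B of size
< κ with A pointwise below B there is an element strictly between them, then κ^{<κ} = κ. -/
theorem powerlt_self_of_exists_Q_kappa (κ : Cardinal)
    (h : ∃ (α : Type) (_ : LinearOrder α), #α = κ ∧
      ∀ A B : Set α, #A < κ → #B < κ → (∀ a ∈ A, ∀ b ∈ B, a < b) →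
        ∃ x : α, (∀ a ∈ A, a < x) ∧ (∀ b ∈ B, x < b)) :
    κ ^< κ = κ := by
  obtain ⟨α, _, hα, hs⟩ := h
  have hs : QSat α κ := hs
  by_cases h1 : κ ≤ 1
  · rcases lt_or_eq_of_le h1 with h0 | h1
    · rw [Cardinal.lt_one_iff_zero] at h0
      subst h0
      exact Cardinal.powerlt_zero
    · subst h1
      apply le_antisymm
      · rw [Cardinal.powerlt_le]
        intro x _
        rw [Cardinal.one_power]
      · have := Cardinal.le_powerlt (c := (0 : Cardinal)) 1 zero_lt_one
        rwa [Cardinal.power_zero] at this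
  · push_neg at h1
    have hk0 : κ ≠ 0 := (zero_lt_one.trans h1).ne'
    have : Nonempty α := by
      rw [← Cardinal.mk_ne_zero_iff, hα]; exact hk0
    by_cases hκ : ℵ₀ ≤ κ
    · apply le_antisymm
      · rw [Cardinal.powerlt_le]
        intro μ hμ
        exact qpow_le hs hκ hα hμ
      · have := Cardinal.le_powerlt (c := (1 : Cardinal)) κ h1
        rwa [Cardinal.power_one] at this
    · exfalso
      push_neg at hκ
      have : Finite α := by
        rw [← Cardinal.mk_lt_aleph0_iff, hα]; exact hκ
      obtain ⟨m, hm⟩ := Finite.exists_max (id : α → α)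
      obtain ⟨x, hx, -⟩ := hs {m} ∅ (by rw [Cardinal.mk_singleton]; exact h1)
        (by rw [Cardinal.mk_emptyCollection]; exact zero_lt_one.trans h1)
        (by rintro a _ b ⟨⟩)
      exact absurd (hm x) (not_le.2 (hx m rfl))
end
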